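/- arXiv:2301.09266 — 2 statements merged into one kernel-verified Lean document; each statement's English description precedes it below -/
import Mathlib

section
/- Let M be the n²×n² convolution matrix of a k×k kernel applied to an n×n image padded only on the top and left (TL padding), with rows/columns ordered by row-major (raster) order of pixels. Then M is lower triangular. -/
/-- The convolution matrix of a TL-padded (top-left padded) `k × k` convolution on an
`n × n` image, in row-major (raster) ordering of pixels.  The entry at row `(i,j)` and
column `(i',j')` is the coefficient of `X_{i',j'}` in `Y_{i,j}`. -/
def convMatrix (n k : ℕ) (K : ℕ → ℕ → ℝ) :
    Matrix (Fin n × Fin n) (Fin n × Fin n) ℝ := fun a b =>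
  if (b.1 : ℕ) ≤ (a.1 : ℕ) ∧ (b.2 : ℕ) ≤ (a.2 : ℕ) ∧
      (a.1 : ℕ) - (b.1 : ℕ) < k ∧ (a.2 : ℕ) - (b.2 : ℕ) < k then
    K (k - 1 - ((a.1 : ℕ) - (b.1 : ℕ))) (k - 1 - ((a.2 : ℕ) - (b.2 : ℕ)))
  else 0

/-- the TL-padded convolution matrix is lower triangular with respect to
row-major ordering: every entry strictly above the diagonal vanishes. -/
theorem convMatrix_lower_triangular (n k : ℕ) (K : ℕ → ℕ → ℝ)
    (a b : Fin n × Fin n)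
    (hab : (a.1 : ℕ) * n + (a.2 : ℕ) < (b.1 : ℕ) * n + (b.2 : ℕ)) :
    convMatrix n k K a b = 0 := by
  unfold convMatrix
  rw [if_neg]
  rintro ⟨h1, h2, -⟩
  have := Nat.mul_le_mul_right n h1
  omega
end

section
/- If the bottom-right weight K_{k-1,k-1} of the kernel equals 1, then the TL-padded convolution map X ↦ Y on n×n images is a linear bijection, and the determinant of its matrix M equals 1. -/
/-- TL-padded convolution of an `n × n` image `X` with a `k × k` kernel `K`:
`Y i j = ∑_{0 ≤ p,q < k} X (i-p) (j-q) * K (k-1-p) (k-1-q)`, out-of-range terms zero. -/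
def tlConv (n k : ℕ) (K : ℕ → ℕ → ℝ) (X : Fin n → Fin n → ℝ) (i j : Fin n) : ℝ :=
  ∑ p ∈ Finset.range k, ∑ q ∈ Finset.range k,
    if h : p ≤ (i : ℕ) ∧ q ≤ (j : ℕ) then
      X ⟨(i : ℕ) - p, Nat.lt_of_le_of_lt (Nat.sub_le _ _) i.isLt⟩
        ⟨(j : ℕ) - q, Nat.lt_of_le_of_lt (Nat.sub_le _ _) j.isLt⟩ *
        K (k - 1 - p) (k - 1 - q)
    else 0

/-- 1-D reindexing lemma: sum over `m` with `m ≤ i`, `i - m < k`, substituted `p = i - m`. -/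
lemma oneD {n : ℕ} (k : ℕ) (i : Fin n) (f : ℕ → ℝ) :
    ∑ m ∈ Finset.range n, (if m ≤ (i : ℕ) ∧ (i : ℕ) - m < k then f ((i : ℕ) - m) else 0)
      = ∑ p ∈ Finset.range k, (if p ≤ (i : ℕ) then f p else 0) := by
  rw [← Finset.sum_filter, ← Finset.sum_filter]
  refine Finset.sum_nbij' (fun m => (i : ℕ) - m) (fun p => (i : ℕ) - p) ?_ ?_ ?_ ?_ ?_
  · intro a ha
    simp only [Finset.mem_filter, Finset.mem_range] at ha ⊢
    omega
  · intro a ha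
    simp only [Finset.mem_filter, Finset.mem_range] at ha ⊢
    have := i.isLt
    omega
  · intro a ha
    simp only [Finset.mem_filter, Finset.mem_range] at ha
    show (i : ℕ) - ((i : ℕ) - a) = a
    omega
  · intro a ha
    simp only [Finset.mem_filter, Finset.mem_range] at ha
    show (i : ℕ) - ((i : ℕ) - a) = a
    omega
  · intro a _
    rfl

/-- 2-D reindexing lemma. -/
lemma twoD {n : ℕ} (k : ℕ) (i j : Fin n) (F : ℕ → ℕ → ℝ) :
    ∑ m1 ∈ Finset.range n, ∑ m2 ∈ Finset.range n,
      (if m1 ≤ (i : ℕ) ∧ m2 ≤ (j : ℕ) ∧ (i : ℕ) - m1 < k ∧ (j : ℕ) - m2 < k then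
        F ((i : ℕ) - m1) ((j : ℕ) - m2) else 0)
      = ∑ p ∈ Finset.range k, ∑ q ∈ Finset.range k,
          (if p ≤ (i : ℕ) ∧ q ≤ (j : ℕ) then F p q else 0) := by
  have step1 : ∀ m1 ∈ Finset.range n,
      (∑ m2 ∈ Finset.range n,
        (if m1 ≤ (i : ℕ) ∧ m2 ≤ (j : ℕ) ∧ (i : ℕ) - m1 < k ∧ (j : ℕ) - m2 < k then
          F ((i : ℕ) - m1) ((j : ℕ) - m2) else 0))
      = (if m1 ≤ (i : ℕ) ∧ (i : ℕ) - m1 < k then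
          ∑ m2 ∈ Finset.range n,
            (if m2 ≤ (j : ℕ) ∧ (j : ℕ) - m2 < k then F ((i : ℕ) - m1) ((j : ℕ) - m2) else 0)
         else 0) := by
    intro m1 _
    split_ifs with h
    · exact Finset.sum_congr rfl fun m2 _ => by split_ifs <;> tauto
    · exact Finset.sum_eq_zero fun m2 _ => by rw [if_neg]; tauto
  rw [Finset.sum_congr rfl step1]
  have step2 : ∀ m1 ∈ Finset.range n,
      (if m1 ≤ (i : ℕ) ∧ (i : ℕ) - m1 < k then
        ∑ m2 ∈ Finset.range n,
          (if m2 ≤ (j : ℕ) ∧ (j : ℕ) - m2 < k then F ((i : ℕ) - m1) ((j : ℕ) - m2) else 0)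
       else 0)
      = (if m1 ≤ (i : ℕ) ∧ (i : ℕ) - m1 < k then
          ∑ q ∈ Finset.range k, (if q ≤ (j : ℕ) then F ((i : ℕ) - m1) q else 0) else 0) := by
    intro m1 _
    split_ifs with h
    · exact oneD k j (fun q => F ((i : ℕ) - m1) q)
    · rfl
  rw [Finset.sum_congr rfl step2,
    oneD k i (fun p => ∑ q ∈ Finset.range k, (if q ≤ (j : ℕ) then F p q else 0))]
  refine Finset.sum_congr rfl fun p _ => ?_
  split_ifs with h
  · exact Finset.sum_congr rfl fun q _ => by split_ifs <;> tauto
  · exact (Finset.sum_eq_zero fun q _ => by rw [if_neg]; tauto).symm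

lemma tlConv_eq_mulVec (n k : ℕ) (K : ℕ → ℕ → ℝ) (X : Fin n → Fin n → ℝ) (i j : Fin n) :
    tlConv n k K X i j = (convMatrix n k K).mulVec (Function.uncurry X) (i, j) := by
  have hn : 0 < n := i.pos
  set F : ℕ → ℕ → ℝ := fun p q =>
    X ⟨((i : ℕ) - p) % n, Nat.mod_lt _ hn⟩ ⟨((j : ℕ) - q) % n, Nat.mod_lt _ hn⟩ *
      K (k - 1 - p) (k - 1 - q) with hF
  have hL : tlConv n k K X i j
      = ∑ p ∈ Finset.range k, ∑ q ∈ Finset.range k,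
          (if p ≤ (i : ℕ) ∧ q ≤ (j : ℕ) then F p q else 0) := by
    unfold tlConv
    refine Finset.sum_congr rfl fun p _ => Finset.sum_congr rfl fun q _ => ?_
    rw [dite_eq_ite]
    split_ifs with h
    · simp only [hF]
      have e1 : (⟨((i : ℕ) - p) % n, Nat.mod_lt _ hn⟩ : Fin n)
          = ⟨(i : ℕ) - p, Nat.lt_of_le_of_lt (Nat.sub_le _ _) i.isLt⟩ := by
        apply Fin.ext
        show ((i : ℕ) - p) % n = (i : ℕ) - p
        exact Nat.mod_eq_of_lt (Nat.lt_of_le_of_lt (Nat.sub_le _ _) i.isLt)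
      have e2 : (⟨((j : ℕ) - q) % n, Nat.mod_lt _ hn⟩ : Fin n)
          = ⟨(j : ℕ) - q, Nat.lt_of_le_of_lt (Nat.sub_le _ _) j.isLt⟩ := by
        apply Fin.ext
        show ((j : ℕ) - q) % n = (j : ℕ) - q
        exact Nat.mod_eq_of_lt (Nat.lt_of_le_of_lt (Nat.sub_le _ _) j.isLt)
      rw [e1, e2]
    · rfl
  have hR : (convMatrix n k K).mulVec (Function.uncurry X) (i, j)
      = ∑ m1 ∈ Finset.range n, ∑ m2 ∈ Finset.range n,
          (if m1 ≤ (i : ℕ) ∧ m2 ≤ (j : ℕ) ∧ (i : ℕ) - m1 < k ∧ (j : ℕ) - m2 < k then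
            F ((i : ℕ) - m1) ((j : ℕ) - m2) else 0) := by
    rw [Matrix.mulVec, dotProduct, Fintype.sum_prod_type,
      ← Fin.sum_univ_eq_sum_range (fun m1 => ∑ m2 ∈ Finset.range n,
          (if m1 ≤ (i : ℕ) ∧ m2 ≤ (j : ℕ) ∧ (i : ℕ) - m1 < k ∧ (j : ℕ) - m2 < k then
            F ((i : ℕ) - m1) ((j : ℕ) - m2) else 0))]
    refine Finset.sum_congr rfl fun b1 _ => ?_
    rw [← Fin.sum_univ_eq_sum_range (fun m2 =>
          (if (b1 : ℕ) ≤ (i : ℕ) ∧ m2 ≤ (j : ℕ) ∧ (i : ℕ) - (b1 : ℕ) < k ∧ (j : ℕ) - m2 < k then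
            F ((i : ℕ) - (b1 : ℕ)) ((j : ℕ) - m2) else 0))]
    refine Finset.sum_congr rfl fun b2 _ => ?_
    rw [convMatrix]
    simp only [ite_mul, zero_mul]
    split_ifs with h
    · simp only [hF, Function.uncurry_apply_pair]
      rw [mul_comm]
      have e1 : (⟨((i : ℕ) - ((i : ℕ) - (b1 : ℕ))) % n, Nat.mod_lt _ hn⟩ : Fin n) = b1 := by
        apply Fin.ext
        show ((i : ℕ) - ((i : ℕ) - (b1 : ℕ))) % n = (b1 : ℕ)
        rw [Nat.sub_sub_self h.1, Nat.mod_eq_of_lt b1.isLt]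
      have e2 : (⟨((j : ℕ) - ((j : ℕ) - (b2 : ℕ))) % n, Nat.mod_lt _ hn⟩ : Fin n) = b2 := by
        apply Fin.ext
        show ((j : ℕ) - ((j : ℕ) - (b2 : ℕ))) % n = (b2 : ℕ)
        rw [Nat.sub_sub_self h.2.1, Nat.mod_eq_of_lt b2.isLt]
      rw [e1, e2]
    · rfl
  rw [hL, hR, twoD]

/-- if the bottom-right kernel weight equals 1, then the TL-padded
convolution map `X ↦ Y` is a (linear) bijection and the determinant of its
convolution matrix equals 1. -/
theorem tlConv_bijective_det_one (n k : ℕ) (hk : 0 < k) (K : ℕ → ℕ → ℝ)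
    (h1 : K (k - 1) (k - 1) = 1) :
    Function.Bijective (tlConv n k K) ∧ (convMatrix n k K).det = 1 := by
  have hdet : (convMatrix n k K).det = 1 := by
    rw [← Matrix.det_reindex_self finProdFinEquiv (convMatrix n k K)]
    set M' := (Matrix.reindex finProdFinEquiv finProdFinEquiv) (convMatrix n k K) with hM'
    have htri : M'.BlockTriangular OrderDual.toDual := by
      intro a b hab
      have hab' : (a : ℕ) < (b : ℕ) := hab
      simp only [hM', Matrix.reindex_apply, Matrix.submatrix_apply]
      rw [convMatrix, if_neg]
      rintro ⟨h1', h2', -, -⟩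
      have ea : finProdFinEquiv (finProdFinEquiv.symm a) = a := Equiv.apply_symm_apply _ _
      have eb : finProdFinEquiv (finProdFinEquiv.symm b) = b := Equiv.apply_symm_apply _ _
      have ha : (a : ℕ) = ((finProdFinEquiv.symm a).2 : ℕ) + n * ((finProdFinEquiv.symm a).1 : ℕ) := by
        conv_lhs => rw [← ea, finProdFinEquiv_apply_val]
      have hb : (b : ℕ) = ((finProdFinEquiv.symm b).2 : ℕ) + n * ((finProdFinEquiv.symm b).1 : ℕ) := by
        conv_lhs => rw [← eb, finProdFinEquiv_apply_val]
      have := ((finProdFinEquiv.symm a).2).isLt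
      have := ((finProdFinEquiv.symm b).2).isLt
      have hle : (b : ℕ) ≤ (a : ℕ) := by
        rw [ha, hb]
        exact Nat.add_le_add h2' (Nat.mul_le_mul_left n h1')
      omega
    rw [Matrix.det_of_lowerTriangular _ htri]
    refine Finset.prod_eq_one fun x _ => ?_
    simp only [hM', Matrix.reindex_apply, Matrix.submatrix_apply]
    rw [convMatrix, if_pos ⟨le_refl _, le_refl _, by omega, by omega⟩]
    simpa using h1
  refine ⟨?_, hdet⟩
  have hu : IsUnit (convMatrix n k K).det := by rw [hdet]; exact isUnit_one
  have hmv : Function.Bijective ((convMatrix n k K).mulVec) := by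
    have : Invertible (convMatrix n k K) := (convMatrix n k K).invertibleOfIsUnitDet hu
    refine ⟨Matrix.mulVec_injective_of_invertible _, fun y => ⟨(convMatrix n k K)⁻¹.mulVec y, ?_⟩⟩
    rw [Matrix.mulVec_mulVec, Matrix.mul_nonsing_inv _ hu, Matrix.one_mulVec]
  have heq : tlConv n k K =
      Function.curry ∘ (convMatrix n k K).mulVec ∘ Function.uncurry := by
    funext X i j
    exact tlConv_eq_mulVec n k K X i j
  rw [heq]
  exact ((Equiv.curry _ _ _).bijective.comp hmv).comp (Equiv.curry _ _ _).symm.bijective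
end
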